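/- Let A be a local pre-Prüfer ring. If 𝔭 and 𝔮 are prime ideals of A with 𝔭 regular (containing a non-zero-divisor), then 𝔭 and 𝔮 are comparable (𝔭 ⊆ 𝔮 or 𝔮 ⊆ 𝔭). -/

import Mathlib

/-- A Prüfer ring: every finitely generated regular ideal is invertible
(as a submodule of the total ring of fractions). -/
def IsPruferRing (R : Type*) [CommRing R] : Prop :=
  ∀ I : Ideal R, I.FG → (∃ r ∈ I, r ∈ nonZeroDivisors R) →
    ∃ J : Submodule R (FractionRing R),
      Submodule.map (Algebra.linearMap R (FractionRing R)) I * J = 1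

/-- A pre-Prüfer ring: every proper homomorphic image is a Prüfer ring. -/
def IsPrePruferRing (R : Type*) [CommRing R] : Prop :=
  ∀ I : Ideal R, I ≠ ⊥ → I ≠ ⊤ → IsPruferRing (R ⧸ I)

/-- The saturation of `K` with respect to powers of `t`. -/
def satIdeal {A : Type*} [CommRing A] (K : Ideal A) (t : A) : Ideal A where
  carrier := {x | ∃ n : ℕ, x * t ^ n ∈ K}
  add_mem' := by
    intro x y hx hy
    obtain ⟨n, hn⟩ := hx
    obtain ⟨m, hm⟩ := hy
    refine ⟨n + m, ?_⟩
    rw [add_mul]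
    refine K.add_mem ?_ ?_
    · rw [pow_add, ← mul_assoc]
      exact K.mul_mem_right _ hn
    · rw [pow_add, mul_comm (t ^ n), ← mul_assoc]
      exact K.mul_mem_right _ hm
  zero_mem' := ⟨0, by simp⟩
  smul_mem' := by
    intro c x hx
    obtain ⟨n, hn⟩ := hx
    exact ⟨n, by rw [smul_eq_mul, mul_assoc]; exact K.mul_mem_left _ hn⟩

lemma mem_satIdeal {A : Type*} [CommRing A] {K : Ideal A} {t x : A} :
    x ∈ satIdeal K t ↔ ∃ n : ℕ, x * t ^ n ∈ K := Iff.rfl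


lemma key_dvd {R : Type*} [CommRing R] [IsLocalRing R] (x y : R)
    (J : Submodule R (FractionRing R))
    (h : Submodule.map (Algebra.linearMap R (FractionRing R)) (Ideal.span {x, y}) * J = 1) :
    x ∣ y ∨ y ∣ x := by
  set F := FractionRing R
  have hinj : Function.Injective (algebraMap R F) := IsFractionRing.injective R F
  have hxmem : algebraMap R F x ∈ Submodule.map (Algebra.linearMap R F) (Ideal.span {x, y}) :=
    Submodule.mem_map_of_mem (Ideal.subset_span (by simp))
  have hymem : algebraMap R F y ∈ Submodule.map (Algebra.linearMap R F) (Ideal.span {x, y}) :=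
    Submodule.mem_map_of_mem (Ideal.subset_span (by simp))
  have h1 : (1 : F) ∈ Submodule.map (Algebra.linearMap R F) (Ideal.span {x, y}) * J := by
    rw [h]; exact Submodule.mem_one.mpr ⟨1, map_one _⟩
  obtain ⟨u, hu, v, hv, huv⟩ :
      ∃ u ∈ J, ∃ v ∈ J, (1 : F) = algebraMap R F x * u + algebraMap R F y * v := by
    refine Submodule.mul_induction_on h1 ?_ ?_
    · rintro m hm j hj
      obtain ⟨t, ht, rfl⟩ := hm
      obtain ⟨c, d, rfl⟩ := Ideal.mem_span_pair.mp ht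
      refine ⟨c • j, J.smul_mem c hj, d • j, J.smul_mem d hj, ?_⟩
      simp only [Algebra.linearMap_apply, map_add, map_mul, Algebra.smul_def]
      ring
    · rintro z w ⟨u, hu, v, hv, rfl⟩ ⟨u', hu', v', hv', rfl⟩
      exact ⟨u + u', J.add_mem hu hu', v + v', J.add_mem hv hv', by ring⟩
  have pair : ∀ w ∈ Submodule.map (Algebra.linearMap R F) (Ideal.span ({x, y} : Set R)),
      ∀ j ∈ J, ∃ c : R, algebraMap R F c = w * j := by
    intro w hw j hj
    have : w * j ∈ (1 : Submodule R F) := h ▸ Submodule.mul_mem_mul hw hj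
    exact Submodule.mem_one.mp this
  obtain ⟨α, hα⟩ := pair _ hxmem u hu
  obtain ⟨β, hβ⟩ := pair _ hymem v hv
  obtain ⟨γ, hγ⟩ := pair _ hymem u hu
  obtain ⟨δ, hδ⟩ := pair _ hxmem v hv
  have hsum : α + β = 1 := hinj (by rw [map_add, hα, hβ, map_one]; exact huv.symm)
  rcases IsLocalRing.isUnit_or_isUnit_of_isUnit_add (hsum ▸ isUnit_one) with hun | hun
  · left
    have key : α * y = x * γ := hinj (by rw [map_mul, map_mul, hα, hγ]; ring)
    refine ⟨↑hun.unit⁻¹ * γ, ?_⟩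
    calc y = ↑hun.unit⁻¹ * (α * y) := by rw [← mul_assoc, hun.val_inv_mul, one_mul]
    _ = x * (↑hun.unit⁻¹ * γ) := by rw [key]; ring
  · right
    have key : β * x = y * δ := hinj (by rw [map_mul, map_mul, hβ, hδ]; ring)
    refine ⟨↑hun.unit⁻¹ * δ, ?_⟩
    calc x = ↑hun.unit⁻¹ * (β * x) := by rw [← mul_assoc, hun.val_inv_mul, one_mul]
    _ = y * (↑hun.unit⁻¹ * δ) := by rw [key]; ring

theorem stmt18 {A : Type*} [CommRing A] [IsLocalRing A] (hA : IsPrePruferRing A)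
    (p q : Ideal A) (hp : p.IsPrime) (hq : q.IsPrime)
    (hreg : ∃ r ∈ p, r ∈ nonZeroDivisors A) :
    p ≤ q ∨ q ≤ p := by
  by_contra hcon
  push_neg at hcon
  obtain ⟨hpq, hqp⟩ := hcon
  obtain ⟨a, hap, haq⟩ := SetLike.not_le_iff_exists.mp hpq
  obtain ⟨b, hbq, hbp⟩ := SetLike.not_le_iff_exists.mp hqp
  obtain ⟨r, hrp, hr⟩ := hreg
  set t : A := a + b with ht
  have htp : t ∉ p := fun h => hbp (by simpa [ht] using p.sub_mem h hap)
  have htq : t ∉ q := fun h => haq (by simpa [ht] using q.sub_mem h hbq)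
  have hb0 : b ≠ 0 := fun h => hbp (h ▸ p.zero_mem)
  have hrb0 : r * b ≠ 0 := fun h =>
    hb0 (mem_nonZeroDivisors_iff_right.mp hr b (by rw [mul_comm]; exact h))
  set K : Ideal A := Ideal.span {r * b} with hK
  have hKp : K ≤ p := by
    rw [hK, Ideal.span_le]
    simpa using p.mul_mem_right b hrp
  have hKq : K ≤ q := by
    rw [hK, Ideal.span_le]
    simpa using q.mul_mem_left r hbq
  set I : Ideal A := satIdeal K t with hIdef
  have hmem : ∀ x : A, x ∈ I ↔ ∃ n : ℕ, x * t ^ n ∈ K := fun x => mem_satIdeal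
  have hIp : I ≤ p := by
    intro x hx
    obtain ⟨n, hn⟩ := (hmem x).mp hx
    rcases hp.mem_or_mem (hKp hn) with hxp | htn
    · exact hxp
    · exact absurd (hp.mem_of_pow_mem n htn) htp
  have hIq : I ≤ q := by
    intro x hx
    obtain ⟨n, hn⟩ := (hmem x).mp hx
    rcases hq.mem_or_mem (hKq hn) with hxq | htn
    · exact hxq
    · exact absurd (hq.mem_of_pow_mem n htn) htq
  have hI0 : I ≠ ⊥ := by
    intro h
    apply hrb0
    have hrbK : r * b ∈ K := by rw [hK]; exact Ideal.subset_span rfl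
    have : r * b ∈ I := (hmem _).mpr ⟨0, by simpa using hrbK⟩
    rwa [h, Ideal.mem_bot] at this
  have hIT : I ≠ ⊤ := fun h => hp.ne_top (eq_top_iff.mpr (h ▸ hIp))
  haveI : Nontrivial (A ⧸ I) := Ideal.Quotient.nontrivial_iff.mpr hIT
  haveI : IsLocalRing (A ⧸ I) :=
    IsLocalRing.of_surjective' (Ideal.Quotient.mk I) Ideal.Quotient.mk_surjective
  have hPruf : IsPruferRing (A ⧸ I) := hA I hI0 hIT
  have htT : Ideal.Quotient.mk I t ∈ Ideal.span {Ideal.Quotient.mk I a, Ideal.Quotient.mk I b} := by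
    rw [ht, map_add]
    exact Ideal.add_mem _ (Ideal.subset_span (by simp)) (Ideal.subset_span (by simp))
  have htreg : Ideal.Quotient.mk I t ∈ nonZeroDivisors (A ⧸ I) := by
    rw [mem_nonZeroDivisors_iff_right]
    intro z hz
    obtain ⟨x, rfl⟩ := Ideal.Quotient.mk_surjective z
    rw [← map_mul, Ideal.Quotient.eq_zero_iff_mem] at hz
    rw [Ideal.Quotient.eq_zero_iff_mem]
    obtain ⟨n, hn⟩ := (hmem _).mp hz
    exact (hmem x).mpr ⟨n + 1, by rw [pow_succ']; rw [← mul_assoc]; exact hn⟩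
  obtain ⟨J, hJ⟩ := hPruf (Ideal.span {Ideal.Quotient.mk I a, Ideal.Quotient.mk I b})
    (Submodule.fg_span (Set.toFinite _)) ⟨Ideal.Quotient.mk I t, htT, htreg⟩
  rcases key_dvd (Ideal.Quotient.mk I a) (Ideal.Quotient.mk I b) J hJ with ⟨c, hc⟩ | ⟨c, hc⟩
  · obtain ⟨c', rfl⟩ := Ideal.Quotient.mk_surjective c
    rw [← map_mul, Ideal.Quotient.eq] at hc
    exact hbp (by simpa using p.add_mem (hIp hc) (p.mul_mem_right c' hap))
  · obtain ⟨c', rfl⟩ := Ideal.Quotient.mk_surjective c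
    rw [← map_mul, Ideal.Quotient.eq] at hc
    exact haq (by simpa using q.add_mem (hIq hc) (q.mul_mem_right c' hbq))
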